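/- Corollary (complete independence): for A ⊆ V with |A| > 1, the variables (X_v)_{v∈A} are mutually independent if and only if γ_D = 0 for every D ⊆ A with |D| > 1. -/

import Mathlib

open Finset

/-- Probability that the subvector `X_A` shows the cell pattern `i ⊆ A`
(coordinates in `i` equal to 1, coordinates in `A \ i` equal to 0), for a
binary random vector whose joint distribution on `{0,1}^V` is encoded by the
vector `π` indexed by subsets of `V`. -/
def cellProb {V : Type*} [Fintype V] [DecidableEq V]
    (π : Finset V → ℝ) (A i : Finset V) : ℝ :=
  ∑ H ∈ univ.powerset.filter (fun H => H ∩ A = i), π H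

/-- The mean parameter: `μ_D = P(X_D = 1_D)`. -/
def mu {V : Type*} [Fintype V] [DecidableEq V]
    (π : Finset V → ℝ) (D : Finset V) : ℝ :=
  ∑ H ∈ univ.powerset.filter (fun H => D ⊆ H), π H

/-- The log-mean linear parameter `γ_D = Σ_{E ⊆ D} (-1)^{|D\E|} log μ_E`. -/
noncomputable def gam {V : Type*} [Fintype V] [DecidableEq V]
    (π : Finset V → ℝ) (D : Finset V) : ℝ :=
  ∑ E ∈ D.powerset, (-1 : ℝ) ^ (D \ E).card * Real.log (mu π E)

set_option linter.unusedSectionVars false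
set_option maxHeartbeats 1600000

section aux
variable {V : Type*} [Fintype V] [DecidableEq V] {π : Finset V → ℝ}

lemma neg_one_pow_sub' {n k : ℕ} (h : k ≤ n) : (-1:ℝ)^(n-k) = (-1)^n * (-1)^k := by
  obtain ⟨m, rfl⟩ := Nat.exists_eq_add_of_le h
  have h2 : ((-1:ℝ)^k) * ((-1:ℝ)^k) = 1 := by
    rw [← pow_add]; exact Even.neg_one_pow ⟨k, rfl⟩
  rw [Nat.add_sub_cancel_left, pow_add, mul_comm ((-1:ℝ)^k), mul_assoc, h2, mul_one]

lemma sign_sum_zero {s : Finset V} (hs : s.Nonempty) :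
    ∑ E ∈ s.powerset, (-1 : ℝ) ^ (s \ E).card = 0 := by
  have h1 : ∑ E ∈ s.powerset, (-1 : ℝ) ^ (s \ E).card
      = (-1)^s.card * ∑ E ∈ s.powerset, (-1:ℝ) ^ E.card := by
    rw [mul_sum]
    refine sum_congr rfl fun E hE => ?_
    rw [card_sdiff_of_subset (mem_powerset.mp hE), neg_one_pow_sub' (card_le_card (mem_powerset.mp hE))]
  have h2 : ∑ E ∈ s.powerset, (-1:ℝ) ^ E.card = 0 := by
    exact_mod_cast congrArg (fun z : ℤ => (z : ℝ))
      (Finset.sum_powerset_neg_one_pow_card_of_nonempty hs)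
  rw [h1, h2, mul_zero]

lemma filter_mem_powerset_eq {D : Finset V} {v : V} (hv : v ∈ D) :
    D.powerset.filter (fun E => v ∈ E) = (D.erase v).powerset.image (insert v ·) := by
  ext E
  simp only [mem_filter, mem_powerset, mem_image]
  constructor
  · rintro ⟨hED, hvE⟩
    exact ⟨E.erase v, fun x hx => mem_erase.mpr ⟨(mem_erase.mp hx).1, hED (mem_erase.mp hx).2⟩,
      by rw [insert_erase hvE]⟩
  · rintro ⟨E', hE', rfl⟩
    refine ⟨insert_subset hv (hE'.trans (erase_subset _ _)), mem_insert_self _ _⟩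

lemma sign_sum_mem_zero {D : Finset V} {v : V} (hv : v ∈ D) (hD : 1 < D.card) :
    ∑ E ∈ D.powerset.filter (fun E => v ∈ E), (-1 : ℝ) ^ (D \ E).card = 0 := by
  rw [filter_mem_powerset_eq hv, sum_image ?inj]
  case inj =>
    intro a ha b hb hab
    rw [mem_coe, mem_powerset] at ha hb
    have hva : v ∉ a := fun h => (mem_erase.mp (ha h)).1 rfl
    have hvb : v ∉ b := fun h => (mem_erase.mp (hb h)).1 rfl
    simp only at hab
    rw [← erase_insert hva, hab, erase_insert hvb]
  have key : ∀ E' ∈ (D.erase v).powerset, D \ insert v E' = (D.erase v) \ E' := by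
    intro E' hE'
    ext x
    simp only [mem_sdiff, mem_insert, mem_erase]
    constructor
    · rintro ⟨hxD, hx⟩; push_neg at hx; exact ⟨⟨hx.1, hxD⟩, hx.2⟩
    · rintro ⟨⟨hxv, hxD⟩, hx⟩; exact ⟨hxD, by push_neg; exact ⟨hxv, hx⟩⟩
  rw [sum_congr rfl (fun E' hE' => by rw [key E' hE'])]
  exact sign_sum_zero (by rw [← card_pos, card_erase_of_mem hv]; omega)

lemma mu_pos (hpos : ∀ H, 0 < π H) (D : Finset V) : 0 < mu π D :=
  sum_pos (fun H _ => hpos H) ⟨univ, by simp⟩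

lemma mu_empty (hsum : ∑ H ∈ (univ : Finset V).powerset, π H = 1) :
    mu π (∅ : Finset V) = 1 := by
  rw [mu, filter_true_of_mem (fun _ _ => empty_subset _), hsum]

lemma cell_singleton_self (v : V) : cellProb π {v} {v} = mu π {v} := by
  rw [cellProb, mu]
  congr 1
  apply filter_congr
  intro H _
  simp [Finset.inter_eq_right, singleton_subset_iff]

lemma cell_singleton_empty (hsum : ∑ H ∈ (univ : Finset V).powerset, π H = 1) (v : V) :
    cellProb π {v} ∅ = 1 - mu π {v} := by
  have hsplit := Finset.sum_filter_add_sum_filter_not (univ : Finset V).powerset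
    (fun H => {v} ⊆ H) π
  rw [hsum] at hsplit
  have he : cellProb π {v} ∅
      = ∑ H ∈ (univ : Finset V).powerset.filter (fun H => ¬ {v} ⊆ H), π H := by
    rw [cellProb]
    congr 1
    apply filter_congr
    intro H _
    simp [eq_empty_iff_forall_notMem, singleton_subset_iff]
  rw [he, mu, ← hsplit]
  ring

lemma mu_eq_sum_cell {D A : Finset V} (hDA : D ⊆ A) :
    mu π D = ∑ j ∈ A.powerset.filter (fun j => D ⊆ j), cellProb π A j := by
  rw [mu, ← sum_fiberwise_of_maps_to (g := fun H => H ∩ A)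
      (t := A.powerset.filter (fun j => D ⊆ j)) (fun H hH => ?_)]
  · refine sum_congr rfl fun j hj => ?_
    rw [mem_filter, mem_powerset] at hj
    rw [cellProb]
    congr 1
    ext H
    simp only [mem_filter, mem_powerset, filter_filter, subset_univ, true_and]
    constructor
    · rintro ⟨h2, h3⟩; exact h3
    · intro h3
      exact ⟨hj.2.trans (h3 ▸ inter_subset_left), h3⟩
  · rw [mem_filter] at hH
    rw [mem_filter, mem_powerset]
    exact ⟨inter_subset_right, subset_inter hH.2 hDA⟩

lemma cell_eq_sum_mu {i A : Finset V} (hiA : i ⊆ A) :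
    cellProb π A i = ∑ t ∈ (A \ i).powerset, (-1:ℝ) ^ t.card * mu π (i ∪ t) := by
  have h1 : ∀ t ∈ (A \ i).powerset, (-1:ℝ)^t.card * mu π (i ∪ t)
      = ∑ j ∈ A.powerset.filter (fun j => i ∪ t ⊆ j), (-1:ℝ)^t.card * cellProb π A j := by
    intro t ht
    rw [mu_eq_sum_cell (union_subset hiA ((mem_powerset.mp ht).trans sdiff_subset)), mul_sum]
  rw [sum_congr rfl h1,
    sum_comm' (s' := fun j => (j \ i).powerset)
      (t' := A.powerset.filter (fun j => i ⊆ j)) ?hcomm]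
  case hcomm =>
    intro t j
    simp only [mem_powerset, mem_filter, union_subset_iff]
    constructor
    · rintro ⟨htAi, hjA, hij, htj⟩
      exact ⟨subset_sdiff.mpr ⟨htj, (subset_sdiff.mp htAi).2⟩, hjA, hij⟩
    · rintro ⟨htji, hjA, hij⟩
      obtain ⟨htj, hdisj⟩ := subset_sdiff.mp htji
      exact ⟨subset_sdiff.mpr ⟨htj.trans hjA, hdisj⟩, hjA, hij, htj⟩
  have h2 : ∀ j ∈ A.powerset.filter (fun j => i ⊆ j),
      ∑ t ∈ (j \ i).powerset, (-1:ℝ)^t.card * cellProb π A j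
      = (if j = i then (1:ℝ) else 0) * cellProb π A j := by
    intro j hj
    rw [mem_filter, mem_powerset] at hj
    rw [← sum_mul]
    congr 1
    have : ∑ t ∈ (j \ i).powerset, (-1:ℝ)^t.card
        = ((∑ t ∈ (j \ i).powerset, (-1:ℤ)^t.card : ℤ) : ℝ) := by push_cast; rfl
    rw [this, Finset.sum_powerset_neg_one_pow_card]
    by_cases h : j = i
    · simp [h]
    · have : j \ i ≠ ∅ := by
        rw [Ne, sdiff_eq_empty_iff_subset]
        exact fun hs => h (subset_antisymm hs hj.2)
      simp [this, h]
  rw [sum_congr rfl h2]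
  rw [Finset.sum_eq_single_of_mem i (by simp [mem_filter, mem_powerset, hiA])
    (fun b _ hbne => by simp [hbne])]
  simp

lemma prod_cells (hsum : ∑ H ∈ (univ : Finset V).powerset, π H = 1)
    {s j : Finset V} (hjs : j ⊆ s) :
    ∏ v ∈ s, cellProb π {v} (j ∩ {v})
      = (∏ v ∈ j, mu π {v}) * ∏ v ∈ s \ j, (1 - mu π {v}) := by
  rw [← union_sdiff_of_subset hjs, prod_union disjoint_sdiff, union_sdiff_of_subset hjs]
  congr 1
  · refine prod_congr rfl fun v hv => ?_
    rw [inter_singleton_of_mem hv, cell_singleton_self]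
  · refine prod_congr rfl fun v hv => ?_
    rw [inter_singleton_of_notMem (mem_sdiff.mp hv).2, cell_singleton_empty hsum]

lemma sum_cells_prod (hsum : ∑ H ∈ (univ : Finset V).powerset, π H = 1)
    (s : Finset V) :
    ∑ t ∈ s.powerset, ∏ v ∈ s, cellProb π {v} (t ∩ {v}) = 1 := by
  rw [sum_congr rfl (fun t ht => prod_cells hsum (mem_powerset.mp ht)), ← prod_add]
  simp

lemma stepA (hsum : ∑ H ∈ (univ : Finset V).powerset, π H = 1)
    {A : Finset V}
    (hfact : ∀ i ⊆ A, cellProb π A i = ∏ v ∈ A, cellProb π {v} (i ∩ {v}))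
    {D : Finset V} (hDA : D ⊆ A) :
    mu π D = ∏ v ∈ D, mu π {v} := by
  have h1 : mu π D = ∑ j ∈ A.powerset.filter (fun j => D ⊆ j),
      ∏ v ∈ A, cellProb π {v} (j ∩ {v}) := by
    rw [mu_eq_sum_cell hDA]
    exact sum_congr rfl fun j hj => hfact j (mem_powerset.mp (mem_filter.mp hj).1)
  have himg : A.powerset.filter (fun j => D ⊆ j)
      = ((A \ D).powerset).image (fun t => D ∪ t) := by
    ext j
    simp only [mem_filter, mem_powerset, mem_image]
    constructor
    · rintro ⟨hjA, hDj⟩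
      exact ⟨j \ D, sdiff_subset_sdiff hjA le_rfl, by rw [union_sdiff_of_subset hDj]⟩
    · rintro ⟨t, ht, rfl⟩
      exact ⟨union_subset hDA (ht.trans sdiff_subset), subset_union_left⟩
  have hinj : ∀ a ∈ (A \ D).powerset, ∀ b ∈ (A \ D).powerset,
      D ∪ a = D ∪ b → a = b := by
    intro a ha b hb hab
    rw [mem_powerset, subset_sdiff] at ha hb
    rw [← union_sdiff_cancel_left ha.2.symm, hab, union_sdiff_cancel_left hb.2.symm]
  rw [h1, himg, sum_image hinj]
  have h2 : ∀ t ∈ (A \ D).powerset,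
      ∏ v ∈ A, cellProb π {v} ((D ∪ t) ∩ {v})
      = (∏ v ∈ D, mu π {v}) * ∏ v ∈ A \ D, cellProb π {v} (t ∩ {v}) := by
    intro t ht
    rw [mem_powerset] at ht
    rw [← union_sdiff_of_subset hDA, prod_union disjoint_sdiff,
      union_sdiff_of_subset hDA]
    congr 1
    · refine prod_congr rfl fun v hv => ?_
      rw [inter_singleton_of_mem (mem_union_left _ hv), cell_singleton_self]
    · refine prod_congr rfl fun v hv => ?_
      congr 1
      have hvD : v ∉ D := (mem_sdiff.mp hv).2
      rw [union_inter_distrib_right, inter_singleton_of_notMem hvD, empty_union]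
  rw [sum_congr rfl h2, ← mul_sum]
  rw [sum_cells_prod hsum, mul_one]

lemma stepB (hsum : ∑ H ∈ (univ : Finset V).powerset, π H = 1)
    {A : Finset V}
    (hP : ∀ D ⊆ A, mu π D = ∏ v ∈ D, mu π {v})
    {i : Finset V} (hiA : i ⊆ A) :
    cellProb π A i = ∏ v ∈ A, cellProb π {v} (i ∩ {v}) := by
  rw [prod_cells hsum hiA, cell_eq_sum_mu hiA]
  have h1 : ∀ t ∈ (A \ i).powerset, (-1:ℝ)^t.card * mu π (i ∪ t)
      = (∏ v ∈ i, mu π {v}) *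
        ((∏ v ∈ t, -(mu π {v})) * ∏ v ∈ (A \ i) \ t, (1:ℝ)) := by
    intro t ht
    rw [mem_powerset] at ht
    have hdisj : Disjoint i t := ((subset_sdiff.mp ht).2).symm
    rw [hP (i ∪ t) (union_subset hiA (ht.trans sdiff_subset)), prod_union hdisj,
      prod_const_one, mul_one]
    have hneg : ∏ v ∈ t, -(mu π {v}) = (-1:ℝ)^t.card * ∏ v ∈ t, mu π {v} := by
      rw [← prod_const (b := (-1:ℝ)), ← prod_mul_distrib]
      exact prod_congr rfl fun v _ => by ring
    rw [hneg]; ring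
  rw [sum_congr rfl h1, ← mul_sum, ← prod_add]
  congr 1
  exact prod_congr rfl fun v _ => by ring

lemma gam_zero_of_mult (hpos : ∀ H, 0 < π H)
    {D : Finset V} (hP : ∀ E ⊆ D, mu π E = ∏ v ∈ E, mu π {v}) (hD : 1 < D.card) :
    gam π D = 0 := by
  have hlog : ∀ E ∈ D.powerset, Real.log (mu π E) = ∑ v ∈ E, Real.log (mu π {v}) := by
    intro E hE
    rw [hP E (mem_powerset.mp hE)]
    exact Real.log_prod (fun v _ => (mu_pos hpos _).ne')
  rw [gam]
  calc ∑ E ∈ D.powerset, (-1:ℝ)^(D \ E).card * Real.log (mu π E)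
      = ∑ E ∈ D.powerset, ∑ v ∈ D,
          (if v ∈ E then (-1:ℝ)^(D \ E).card * Real.log (mu π {v}) else 0) := by
        refine sum_congr rfl fun E hE => ?_
        rw [hlog E hE, mul_sum, ← sum_filter, filter_mem_eq_inter,
          inter_eq_right.mpr (mem_powerset.mp hE)]
    _ = ∑ v ∈ D, ∑ E ∈ D.powerset,
          (if v ∈ E then (-1:ℝ)^(D \ E).card * Real.log (mu π {v}) else 0) := sum_comm
    _ = ∑ v ∈ D, (∑ E ∈ D.powerset.filter (fun E => v ∈ E), (-1:ℝ)^(D \ E).card)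
          * Real.log (mu π {v}) := by
        refine sum_congr rfl fun v hv => ?_
        rw [sum_mul, sum_filter]
    _ = 0 := by
        refine sum_eq_zero fun v hv => ?_
        rw [sign_sum_mem_zero hv hD, zero_mul]

lemma mult_of_gam_zero (hpos : ∀ H, 0 < π H)
    (hsum : ∑ H ∈ (univ : Finset V).powerset, π H = 1) {A : Finset V}
    (hg : ∀ D ⊆ A, 1 < D.card → gam π D = 0) :
    ∀ D, D ⊆ A → mu π D = ∏ v ∈ D, mu π {v} := by
  intro D
  induction D using Finset.strongInduction with
  | _ D ih =>
    intro hDA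
    rcases lt_or_ge D.card 2 with h1 | h1
    · have : D.card = 0 ∨ D.card = 1 := by omega
      rcases this with h | h
      · rw [card_eq_zero.mp h, mu_empty hsum, prod_empty]
      · obtain ⟨v, rfl⟩ := card_eq_one.mp h
        rw [prod_singleton]
    · have h0 := hg D hDA h1
      rw [gam, ← Finset.add_sum_erase _ _ (mem_powerset_self D),
        sdiff_self, bot_eq_empty, card_empty, pow_zero, one_mul] at h0
      have hsub : ∀ E ∈ D.powerset.erase D,
          Real.log (mu π E) = ∑ v ∈ E, Real.log (mu π {v}) := by
        intro E hE
        obtain ⟨hne, hE'⟩ := mem_erase.mp hE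
        rw [ih E (Finset.ssubset_iff_subset_ne.mpr ⟨mem_powerset.mp hE', hne⟩)
          ((mem_powerset.mp hE').trans hDA)]
        exact Real.log_prod (fun v _ => (mu_pos hpos _).ne')
      have hS : ∑ E ∈ D.powerset.erase D, (-1:ℝ)^(D \ E).card * Real.log (mu π E)
          = - ∑ v ∈ D, Real.log (mu π {v}) := by
        calc ∑ E ∈ D.powerset.erase D, (-1:ℝ)^(D \ E).card * Real.log (mu π E)
            = ∑ E ∈ D.powerset.erase D, ∑ v ∈ D,
                (if v ∈ E then (-1:ℝ)^(D \ E).card * Real.log (mu π {v}) else 0) := by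
              refine sum_congr rfl fun E hE => ?_
              rw [hsub E hE, mul_sum, ← sum_filter, filter_mem_eq_inter,
                inter_eq_right.mpr (mem_powerset.mp (mem_erase.mp hE).2)]
          _ = ∑ v ∈ D, ∑ E ∈ D.powerset.erase D,
                (if v ∈ E then (-1:ℝ)^(D \ E).card * Real.log (mu π {v}) else 0) := sum_comm
          _ = ∑ v ∈ D, (∑ E ∈ (D.powerset.erase D).filter (fun E => v ∈ E),
                (-1:ℝ)^(D \ E).card) * Real.log (mu π {v}) := by
              refine sum_congr rfl fun v hv => ?_
              rw [sum_mul, sum_filter]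
          _ = - ∑ v ∈ D, Real.log (mu π {v}) := by
              rw [← Finset.sum_neg_distrib]
              refine sum_congr rfl fun v hv => ?_
              have hfe : (D.powerset.erase D).filter (fun E => v ∈ E)
                  = (D.powerset.filter (fun E => v ∈ E)).erase D := by
                ext E
                simp only [mem_filter, mem_erase]
                tauto
              rw [hfe, Finset.sum_erase_eq_sub (by simp [mem_filter, hv]),
                sign_sum_mem_zero hv h1, sdiff_self, bot_eq_empty, card_empty, pow_zero]
              ring
      rw [hS] at h0
      have hlog : Real.log (mu π D) = Real.log (∏ v ∈ D, mu π {v}) := by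
        rw [Real.log_prod (fun v _ => (mu_pos hpos _).ne')]
        linarith
      exact Real.log_injOn_pos (Set.mem_Ioi.mpr (mu_pos hpos D))
        (Set.mem_Ioi.mpr (prod_pos fun v _ => mu_pos hpos {v})) hlog

end aux

theorem complete_independence_iff_gamma_zero {V : Type*} [Fintype V] [DecidableEq V]
    (π : Finset V → ℝ) (hpos : ∀ H : Finset V, 0 < π H)
    (hsum : ∑ H ∈ (univ : Finset V).powerset, π H = 1)
    (A : Finset V) (hA : 1 < A.card) :
    (∀ i ⊆ A, cellProb π A i = ∏ v ∈ A, cellProb π {v} (i ∩ {v})) ↔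
      (∀ D ⊆ A, 1 < D.card → gam π D = 0) := by
  constructor
  · intro hfact D hDA hD
    exact gam_zero_of_mult hpos (fun E hE => stepA hsum hfact (hE.trans hDA)) hD
  · intro hg i hiA
    exact stepB hsum (fun D hDA => mult_of_gam_zero hpos hsum hg D hDA) hiA
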